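/- arXiv:1605.08873 — 3 statements merged into one kernel-verified Lean document; each statement's English description precedes it below -/
import Mathlib

section
/- Let X be a compact metric space and f : X → X a homeomorphism. If every point of X is positively recurrent for f, then for every x ∈ X the closure of the forward orbit {fⁿ(x) : n ≥ 0} equals the closure of the full orbit {fⁿ(x) : n ∈ ℤ}. -/
/-- Forward orbit closure equals full orbit closure under positive recurrence. -/
theorem stmt_0 {X : Type*} [MetricSpace X] [CompactSpace X] (f : X ≃ₜ X)
    (hrec : ∀ x : X, x ∈ closure (Set.range fun n : ℕ => (⇑f)^[n + 1] x)) :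
    ∀ x : X,
      closure (Set.range fun n : ℕ => (⇑f)^[n] x) =
        closure (Set.range fun n : ℤ => (f.toEquiv ^ n) x) := by
  intro x
  set A := closure (Set.range fun n : ℕ => (⇑f)^[n] x) with hA
  have himg : ⇑f '' A = closure (Set.range fun n : ℕ => (⇑f)^[n + 1] x) := by
    have hc : (⇑f ∘ fun n : ℕ => (⇑f)^[n] x) = fun n : ℕ => (⇑f)^[n + 1] x := by
      funext n
      exact (Function.iterate_succ_apply' (f : X → X) n x).symm
    rw [hA, f.image_closure, ← Set.range_comp, hc]
  have hBA : ⇑f '' A ⊆ A := by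
    rw [himg]
    apply closure_mono
    rintro _ ⟨n, rfl⟩
    exact ⟨n + 1, rfl⟩
  have hxB : x ∈ ⇑f '' A := by rw [himg]; exact hrec x
  have hiter : ∀ n : ℕ, (⇑f)^[n] x ∈ ⇑f '' A := by
    intro n
    induction n with
    | zero => exact hxB
    | succ n ih =>
        rw [Function.iterate_succ_apply' (f : X → X) n x]
        exact Set.image_mono hBA ⟨_, ih, rfl⟩
  have hclosed : IsClosed (⇑f '' A) := by rw [himg]; exact isClosed_closure
  have hAB : A ⊆ ⇑f '' A :=
    closure_minimal (by rintro _ ⟨n, rfl⟩; exact hiter n) hclosed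
  have hsymm : ∀ a ∈ A, f.symm a ∈ A := by
    intro a ha
    obtain ⟨b, hb, rfl⟩ := hAB ha
    simpa using hb
  have hneg : ∀ m : ℕ, (⇑f.symm)^[m] x ∈ A := by
    intro m
    induction m with
    | zero => exact subset_closure ⟨0, rfl⟩
    | succ m ih =>
        rw [Function.iterate_succ_apply' (f.symm : X → X) m x]
        exact hsymm _ ih
  apply Set.Subset.antisymm
  · apply closure_mono
    rintro _ ⟨n, rfl⟩
    exact ⟨(n : ℤ), by simp [zpow_natCast, ← Equiv.Perm.iterate_eq_pow]⟩
  · apply closure_minimal _ isClosed_closure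
    rintro _ ⟨n, rfl⟩
    obtain ⟨m, rfl | rfl⟩ := n.eq_nat_or_neg
    · have : (f.toEquiv ^ (m : ℤ)) x = (⇑f)^[m] x := by
        simp [zpow_natCast, ← Equiv.Perm.iterate_eq_pow]
      show (f.toEquiv ^ (m : ℤ)) x ∈ A
      rw [this]
      exact subset_closure ⟨m, rfl⟩
    · have : (f.toEquiv ^ (-(m : ℤ))) x = (⇑f.symm)^[m] x := by
        simp [zpow_neg, zpow_natCast, ← inv_pow, ← Equiv.Perm.iterate_eq_pow,
          Equiv.Perm.inv_def]
      show (f.toEquiv ^ (-(m : ℤ))) x ∈ A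
      rw [this]
      exact hneg m
end

section
/- There is no homeomorphism f of a non-compact, locally compact, Hausdorff topological space X (with X nonempty) such that every forward orbit {fⁿ(x) : n ≥ 0} is dense in X. (Gottschalk's theorem, used as Theorem B of [G] in the paper.) -/
open Set Function

/-- Gottschalk: no forward minimal homeomorphism on a nonempty non-compact
locally compact Hausdorff space. -/
theorem stmt_2 {X : Type*} [TopologicalSpace X] [Nonempty X] [LocallyCompactSpace X]
    [T2Space X] (hX : ¬ CompactSpace X) (f : X ≃ₜ X) :
    ¬ ∀ x : X, Dense (Set.range fun n : ℕ => (⇑f)^[n] x) := by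
  intro h
  obtain ⟨x0⟩ := ‹Nonempty X›
  obtain ⟨K, hK, hKmem⟩ := exists_compact_mem_nhds x0
  set U : Set X := interior K with hU
  have hUopen : IsOpen U := isOpen_interior
  have hUne : U.Nonempty := ⟨x0, mem_interior_iff_mem_nhds.2 hKmem⟩
  have hUK : U ⊆ K := interior_subset
  have hcont : ∀ n : ℕ, Continuous ((⇑f)^[n]) := fun n => f.continuous.iterate n
  -- every point enters U at a positive time
  have henter : ∀ x : X, ∃ n : ℕ, 1 ≤ n ∧ (⇑f)^[n] x ∈ U := by
    intro x
    obtain ⟨y, ⟨n, rfl⟩, hyU⟩ := (h (f x)).exists_mem_open hUopen hUne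
    refine ⟨n + 1, Nat.succ_le_succ (Nat.zero_le n), ?_⟩
    rwa [Function.iterate_succ_apply]
  -- compactness: bounded return time on K
  have hcover : K ⊆ ⋃ n : ℕ, (⇑f)^[n+1] ⁻¹' U := by
    intro y hy
    obtain ⟨n, hn1, hnU⟩ := henter y
    exact mem_iUnion.2 ⟨n - 1, by simpa [Nat.sub_add_cancel hn1] using hnU⟩
  obtain ⟨t, ht⟩ := hK.elim_finite_subcover (fun n : ℕ => (⇑f)^[n+1] ⁻¹' U)
    (fun n => hUopen.preimage (hcont (n+1))) hcover
  set N : ℕ := t.sup id + 1 with hN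
  have hret : ∀ y ∈ K, ∃ d : ℕ, 1 ≤ d ∧ d ≤ N ∧ (⇑f)^[d] y ∈ U := by
    intro y hy
    have := ht hy
    rw [Set.mem_iUnion₂] at this
    obtain ⟨n, hnt, hnU⟩ := this
    exact ⟨n + 1, Nat.succ_le_succ (Nat.zero_le n),
      Nat.succ_le_succ (Finset.le_sup (f := id) hnt), hnU⟩
  -- syndetic visits: once in U, the orbit visits U in every window of length N
  have hsynd : ∀ y : X, y ∈ U → ∀ n : ℕ, ∃ m : ℕ, n ≤ m ∧ m ≤ n + N ∧ (⇑f)^[m] y ∈ U := by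
    intro y hyU n
    induction n with
    | zero => exact ⟨0, le_rfl, Nat.zero_le _, hyU⟩
    | succ n ih =>
      obtain ⟨m, hnm, hmN, hmU⟩ := ih
      rcases Nat.lt_or_ge n m with hlt | hge
      · exact ⟨m, hlt, by omega, hmU⟩
      · have hmn : m = n := le_antisymm hge hnm
        subst hmn
        obtain ⟨d, hd1, hdN, hdU⟩ := hret _ (hUK hmU)
        refine ⟨m + d, by omega, by omega, ?_⟩
        rw [Nat.add_comm, Function.iterate_add_apply]
        exact hdU
  -- preimages of K under iterates are compact
  have hpre : ∀ d : ℕ, IsCompact ((⇑f)^[d] ⁻¹' K) := by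
    intro d
    have heq : (⇑f)^[d] ⁻¹' K = (⇑f.symm)^[d] '' K := by
      ext z
      constructor
      · intro hz
        exact ⟨(⇑f)^[d] z, hz, (Function.LeftInverse.iterate f.symm_apply_apply d) z⟩
      · rintro ⟨w, hw, rfl⟩
        have : (⇑f)^[d] ((⇑f.symm)^[d] w) = w :=
          (Function.LeftInverse.iterate f.apply_symm_apply d) w
        simpa [Set.mem_preimage, this] using hw
    rw [heq]
    exact hK.image ((f.symm.continuous).iterate d)
  -- the orbit of x0 lies in a compact set C
  obtain ⟨m0, _, hm0U⟩ := henter x0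
  set C : Set X := (⋃ d ∈ Finset.range (N+1), (⇑f)^[d] ⁻¹' K) ∪
      ((fun i => (⇑f)^[i] x0) '' {i | i < m0}) with hC
  have hCcomp : IsCompact C := by
    refine IsCompact.union ?_ ?_
    · exact (Finset.range (N+1)).isCompact_biUnion (fun d _ => hpre d)
    · exact ((Set.finite_Iio m0).image _).isCompact
  have hrange : Set.range (fun n : ℕ => (⇑f)^[n] x0) ⊆ C := by
    rintro _ ⟨n, rfl⟩
    rcases Nat.lt_or_ge n m0 with hlt | hge
    · exact Or.inr ⟨n, hlt, rfl⟩
    · obtain ⟨m, hm1, hm2, hmU⟩ := hsynd _ hm0U (n - m0)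
      refine Or.inl (Set.mem_iUnion₂.2
        ⟨m0 + m - n, Finset.mem_range.2 (by omega), ?_⟩)
      show (⇑f)^[m0 + m - n] ((⇑f)^[n] x0) ∈ K
      rw [← Function.iterate_add_apply]
      have he : m0 + m - n + n = m + m0 := by omega
      rw [he, Function.iterate_add_apply]
      exact hUK hmU
  -- hence X itself is compact: contradiction
  have hdense := h x0
  have huniv : (Set.univ : Set X) ⊆ C := by
    calc (Set.univ : Set X) = closure (Set.range fun n : ℕ => (⇑f)^[n] x0) :=
          hdense.closure_eq.symm
      _ ⊆ closure C := closure_mono hrange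
      _ = C := hCcomp.isClosed.closure_eq
  exact hX (isCompact_univ_iff.1 (hCcomp.of_isClosed_subset isClosed_univ huniv))
end

section
/- Let X be a locally compact Hausdorff space and f : X → X a homeomorphism such that the union U of dense orbits is open and nonempty, every point of X is positively recurrent, and every forward orbit of a point of U is dense in X. Then X is compact. (This encapsulates the argument in Remark 3.1 via Gottschalk's theorem: a quasi-minimal homeomorphism with all points positively recurrent on a non-compact locally compact space cannot exist unless the space is compact.) -/
/-- A quasi-minimal homeomorphism of a locally compact Hausdorff space all of
whose points are positively recurrent and whose dense-orbit points have dense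
forward orbits forces the space to be compact. -/
theorem stmt_11 {X : Type*} [TopologicalSpace X] [LocallyCompactSpace X] [T2Space X]
    (f : X ≃ₜ X)
    (hopen : IsOpen {x : X | Dense (Set.range fun n : ℤ => (f.toEquiv ^ n) x)})
    (hne : {x : X | Dense (Set.range fun n : ℤ => (f.toEquiv ^ n) x)}.Nonempty)
    (hrec : ∀ x : X, x ∈ closure (Set.range fun n : ℕ => (⇑f)^[n + 1] x))
    (hfwd : ∀ x ∈ {x : X | Dense (Set.range fun n : ℤ => (f.toEquiv ^ n) x)},
      Dense (Set.range fun n : ℕ => (⇑f)^[n] x)) :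
    CompactSpace X := by
  set U : Set X := {x : X | Dense (Set.range fun n : ℤ => (f.toEquiv ^ n) x)} with hU
  -- U is invariant under f
  have hUinv : ∀ y ∈ U, f y ∈ U := by
    intro y hy
    have hrange : (Set.range fun n : ℤ => (f.toEquiv ^ n) (f y)) =
        (Set.range fun n : ℤ => (f.toEquiv ^ n) y) := by
      ext z
      constructor
      · rintro ⟨n, rfl⟩
        refine ⟨n + 1, ?_⟩
        show (f.toEquiv ^ (n + 1)) y = (f.toEquiv ^ n) (f y)
        rw [zpow_add_one, Equiv.Perm.mul_apply]
        rfl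
      · rintro ⟨n, rfl⟩
        refine ⟨n - 1, ?_⟩
        have : (f.toEquiv ^ (n - 1 + 1)) y = (f.toEquiv ^ (n - 1)) (f y) := by
          rw [zpow_add_one, Equiv.Perm.mul_apply]; rfl
        rw [sub_add_cancel] at this
        exact this.symm
    have : Dense (Set.range fun n : ℤ => (f.toEquiv ^ n) (f y)) := by
      rw [hrange]; exact hy
    exact this
  obtain ⟨x, hx⟩ := hne
  obtain ⟨K, hK, hxK, hKU⟩ := exists_compact_subset hopen hx
  set V : Set X := interior K with hV
  have hVopen : IsOpen V := isOpen_interior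
  have hxV : x ∈ V := hxK
  have hVK : V ⊆ K := interior_subset
  -- K' = K ∪ f '' K, compact, contained in U
  have hK' : IsCompact (K ∪ f '' K) := hK.union (hK.image f.continuous)
  have hK'U : (K ∪ f '' K) ⊆ U := by
    rintro z (hz | ⟨w, hw, rfl⟩)
    · exact hKU hz
    · exact hUinv w (hKU hw)
  -- every point of K' eventually hits V
  have hcov : (K ∪ f '' K) ⊆ ⋃ n : ℕ, (⇑f)^[n] ⁻¹' V := by
    intro z hz
    have hdz : Dense (Set.range fun n : ℕ => (⇑f)^[n] z) := hfwd z (hK'U hz)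
    obtain ⟨_, ⟨n, rfl⟩, hnV⟩ := hdz.exists_mem_open hVopen ⟨x, hxV⟩
    exact Set.mem_iUnion.2 ⟨n, hnV⟩
  obtain ⟨t, ht⟩ := hK'.elim_finite_subcover (fun n : ℕ => (⇑f)^[n] ⁻¹' V)
    (fun n => hVopen.preimage (f.continuous.iterate n)) hcov
  set N : ℕ := t.sup id with hN
  have hbound : ∀ z ∈ K ∪ f '' K, ∃ n ≤ N, (⇑f)^[n] z ∈ V := by
    intro z hz
    obtain ⟨n, hn, hnV⟩ := Set.mem_iUnion₂.1 (ht hz)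
    exact ⟨n, Finset.le_sup (f := id) hn, hnV⟩
  -- the forward orbit of x visits V with gaps at most N+1
  have hsyn : ∀ j : ℕ, ∃ s ≤ j, j - s ≤ N + 1 ∧ (⇑f)^[s] x ∈ V := by
    intro j
    induction j with
    | zero => exact ⟨0, le_refl 0, by omega, by simpa using hxV⟩
    | succ j ih =>
      obtain ⟨s, hs, hd, hsV⟩ := ih
      by_cases hcase : j + 1 - s ≤ N + 1
      · exact ⟨s, hs.trans (Nat.le_succ j), hcase, hsV⟩
      · have hj : j = s + N + 1 := by omega
        have hz : f ((⇑f)^[s] x) ∈ K ∪ f '' K := Or.inr ⟨(⇑f)^[s] x, hVK hsV, rfl⟩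
        obtain ⟨n, hn, hnV⟩ := hbound _ hz
        refine ⟨s + 1 + n, by omega, by omega, ?_⟩
        have : (⇑f)^[s + 1 + n] x = (⇑f)^[n] (f ((⇑f)^[s] x)) := by
          rw [show s + 1 + n = n + (1 + s) by omega, Function.iterate_add_apply,
            Function.iterate_add_apply, Function.iterate_one]
        rw [this]
        exact hnV
  -- hence the forward orbit of x lies in a compact set C
  set C : Set X := ⋃ m ∈ Finset.range (N + 2), (⇑f)^[m] '' K with hC
  have hCcomp : IsCompact C :=
    (Finset.range (N + 2)).finite_toSet.isCompact_biUnion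
      (fun m _ => hK.image (f.continuous.iterate m))
  have horb : (Set.range fun n : ℕ => (⇑f)^[n] x) ⊆ C := by
    rintro _ ⟨j, rfl⟩
    obtain ⟨s, hs, hd, hsV⟩ := hsyn j
    have heq : (⇑f)^[j] x = (⇑f)^[j - s] ((⇑f)^[s] x) := by
      rw [← Function.iterate_add_apply, Nat.sub_add_cancel hs]
    show (⇑f)^[j] x ∈ C
    rw [heq]
    exact Set.mem_biUnion (Finset.mem_range.2 (by omega)) ⟨(⇑f)^[s] x, hVK hsV, rfl⟩
  have hdense : Dense (Set.range fun n : ℕ => (⇑f)^[n] x) := hfwd x hx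
  have huniv : (Set.univ : Set X) ⊆ C := by
    have h1 : closure (Set.range fun n : ℕ => (⇑f)^[n] x) ⊆ closure C :=
      closure_mono horb
    rw [hdense.closure_eq, hCcomp.isClosed.closure_eq] at h1
    exact h1
  have hcu : IsCompact (Set.univ : Set X) := by
    rw [huniv.antisymm (Set.subset_univ C)]
    exact hCcomp
  exact isCompact_univ_iff.1 hcu
end
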